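/- If n·aₙ → 0 as n → ∞ and lim_{x→1⁻} ∑ aₙ xⁿ = s, then the series ∑ aₙ converges to s. -/

import Mathlib

open Filter Topology

set_option maxHeartbeats 1000000

theorem tauber_theorem (a : ℕ → ℝ) (s : ℝ)
    (hTaub : Tendsto (fun n : ℕ => (n : ℝ) * a n) atTop (nhds 0))
    (hF : Tendsto (fun x : ℝ => ∑' i, a i * x^i) (nhdsWithin 1 (Set.Ico (0:ℝ) 1)) (nhds s)) :
    Tendsto (fun n => ∑ i ∈ Finset.range (n+1), a i) atTop (nhds s) := by
  -- a tends to 0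
  have ha0 : Tendsto a atTop (nhds 0) := by
    have h1 : Tendsto (fun n : ℕ => ((n : ℝ)⁻¹) * ((n : ℝ) * a n)) atTop (nhds 0) := by
      simpa using (tendsto_inv_atTop_nhds_zero_nat.mul hTaub)
    refine h1.congr' ?_
    filter_upwards [eventually_ge_atTop 1] with n hn
    have : (n : ℝ) ≠ 0 := by positivity
    field_simp
  -- a is bounded
  obtain ⟨C, hC⟩ : ∃ C, ∀ i, |a i| ≤ C := by
    obtain ⟨C, hC⟩ := (ha0.abs).bddAbove_range
    exact ⟨C, fun i => hC ⟨i, rfl⟩⟩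
  -- summability
  have hsum : ∀ y : ℝ, 0 ≤ y → y < 1 → Summable (fun i => a i * y ^ i) := by
    intro y hy0 hy1
    apply Summable.of_norm_bounded (g := fun i => C * y ^ i)
      ((summable_geometric_of_lt_one hy0 hy1).mul_left C)
    intro i
    rw [norm_mul, norm_pow, Real.norm_eq_abs, Real.norm_eq_abs, abs_of_nonneg hy0]
    exact mul_le_mul_of_nonneg_right (hC i) (pow_nonneg hy0 i)
  -- the sequence x n = 1 - 1/(n+1)
  set x : ℕ → ℝ := fun n => 1 - 1 / ((n : ℝ) + 1) with hxdef
  have hx0 : ∀ n, 0 ≤ x n := by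
    intro n
    have h1 : 1 / ((n : ℝ) + 1) ≤ 1 := by
      rw [div_le_one (by positivity)]; linarith [Nat.cast_nonneg (α := ℝ) n]
    simp only [hxdef]; linarith
  have hx1 : ∀ n, x n < 1 := by
    intro n
    have : 0 < 1 / ((n : ℝ) + 1) := by positivity
    simp only [hxdef]; linarith
  have hxsub : ∀ n, 1 - x n = 1 / ((n : ℝ) + 1) := fun n => by simp [hxdef]
  have hxtend : Tendsto x atTop (nhdsWithin 1 (Set.Ico (0:ℝ) 1)) := by
    apply tendsto_nhdsWithin_of_tendsto_nhds_of_eventually_within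
    · show Tendsto (fun n : ℕ => 1 - 1 / ((n : ℝ) + 1)) atTop (nhds 1)
      have h0 : Tendsto (fun n : ℕ => 1 / ((n : ℝ) + 1)) atTop (nhds 0) :=
        tendsto_one_div_add_atTop_nhds_zero_nat
      have h1 := (tendsto_const_nhds (x := (1:ℝ)) (f := atTop)).sub h0
      simpa using h1
    · exact Eventually.of_forall fun n => ⟨hx0 n, hx1 n⟩
  -- g n = F (x n) tends to s
  set g : ℕ → ℝ := fun n => ∑' i, a i * (x n) ^ i with hgdef
  have hg : Tendsto g atTop (nhds s) := hF.comp hxtend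
  -- split g n
  set T : ℕ → ℝ := fun n => ∑' i, a (i + (n+1)) * (x n) ^ (i + (n+1)) with hTdef
  have hsplit : ∀ n, g n = ∑ i ∈ Finset.range (n+1), a i * (x n) ^ i + T n := by
    intro n
    exact (Summable.sum_add_tsum_nat_add (n+1) (hsum (x n) (hx0 n) (hx1 n))).symm
  -- A n : first part error
  set A : ℕ → ℝ := fun n => ∑ i ∈ Finset.range (n+1), a i * (1 - (x n) ^ i) with hAdef
  have hkey : ∀ n, (∑ i ∈ Finset.range (n+1), a i) - g n = A n - T n := by
    intro n
    rw [hsplit n, hAdef]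
    simp only [mul_sub, mul_one, Finset.sum_sub_distrib]
    ring
  -- 1 - y^i ≤ i (1 - y) for 0 ≤ y ≤ 1
  have hpow : ∀ (y : ℝ), 0 ≤ y → y ≤ 1 → ∀ i : ℕ, 1 - y ^ i ≤ i * (1 - y) := by
    intro y hy0 hy1 i
    induction i with
    | zero => simp
    | succ k ih =>
      have hyk : y ^ k ≤ 1 := pow_le_one₀ hy0 hy1
      have : y ^ (k+1) = y ^ k * y := by ring
      push_cast
      nlinarith
  -- A tends to 0
  have hA : Tendsto A atTop (nhds 0) := by
    have hu : Tendsto (fun i : ℕ => (i : ℝ) * |a i|) atTop (nhds 0) := by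
      have := hTaub.abs
      simp only [abs_zero] at this
      refine this.congr fun i => ?_
      rw [abs_mul, abs_of_nonneg (Nat.cast_nonneg i)]
    have hces := hu.cesaro
    have hces' : Tendsto (fun n : ℕ => ((n : ℝ) + 1)⁻¹ *
        ∑ i ∈ Finset.range (n+1), (i : ℝ) * |a i|) atTop (nhds 0) := by
      have := hces.comp (tendsto_add_atTop_nat 1)
      refine this.congr fun n => ?_
      simp [Function.comp]
    refine squeeze_zero_norm (fun n => ?_) hces'
    have hb : ∀ i ∈ Finset.range (n+1), |a i * (1 - (x n) ^ i)| ≤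
        ((i : ℝ) * |a i|) * (1 / ((n : ℝ) + 1)) := by
      intro i _
      have h1 : 1 - (x n) ^ i ≤ (i : ℝ) * (1 - x n) := hpow (x n) (hx0 n) (hx1 n).le i
      have h2 : 0 ≤ 1 - (x n) ^ i := by
        have := pow_le_one₀ (hx0 n) (hx1 n).le (n := i); linarith
      rw [abs_mul, abs_of_nonneg h2]
      calc |a i| * (1 - (x n) ^ i) ≤ |a i| * ((i : ℝ) * (1 - x n)) :=
            mul_le_mul_of_nonneg_left h1 (abs_nonneg _)
        _ = ((i : ℝ) * |a i|) * (1 / ((n : ℝ) + 1)) := by rw [hxsub n]; ring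
    calc ‖A n‖ ≤ ∑ i ∈ Finset.range (n+1), |a i * (1 - (x n) ^ i)| := by
          rw [Real.norm_eq_abs]; exact Finset.abs_sum_le_sum_abs _ _
      _ ≤ ∑ i ∈ Finset.range (n+1), ((i : ℝ) * |a i|) * (1 / ((n : ℝ) + 1)) :=
          Finset.sum_le_sum hb
      _ = ((n : ℝ) + 1)⁻¹ * ∑ i ∈ Finset.range (n+1), (i : ℝ) * |a i| := by
          rw [← Finset.sum_mul]; ring
  -- T tends to 0
  have hT : Tendsto T atTop (nhds 0) := by
    rw [NormedAddCommGroup.tendsto_nhds_zero]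
    intro ε hε
    have hε2 : 0 < ε / 2 := by linarith
    obtain ⟨N, hN⟩ := (Metric.tendsto_atTop.mp hTaub) (ε/2) hε2
    filter_upwards [eventually_ge_atTop N] with n hn
    have hxn0 := hx0 n
    have hxn1 := hx1 n
    have hn1 : (0:ℝ) < (n : ℝ) + 1 := by positivity
    -- termwise bound
    have hterm : ∀ i : ℕ, ‖a (i + (n+1)) * (x n) ^ (i + (n+1))‖ ≤
        (ε / 2 / ((n : ℝ) + 1)) * (x n) ^ (i + (n+1)) := by
      intro i
      set k := i + (n+1) with hk
      have hkN : N ≤ k := le_trans hn (by omega)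
      have h1 : |(k : ℝ) * a k| < ε / 2 := by
        have := hN k hkN
        rwa [Real.dist_eq, sub_zero] at this
      have hkpos : (0:ℝ) < (k : ℝ) := by
        have : 0 < k := by omega
        exact_mod_cast this
      have h2 : |a k| ≤ ε / 2 / (k : ℝ) := by
        rw [le_div_iff₀ hkpos]
        rw [abs_mul, abs_of_nonneg hkpos.le] at h1
        linarith [h1]
      have h3 : ε / 2 / (k : ℝ) ≤ ε / 2 / ((n : ℝ) + 1) := by
        apply div_le_div_of_nonneg_left hε2.le hn1
        have : n + 1 ≤ k := by omega
        exact_mod_cast this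
      rw [norm_mul, norm_pow, Real.norm_eq_abs, Real.norm_eq_abs, abs_of_nonneg hxn0]
      exact mul_le_mul_of_nonneg_right (le_trans h2 h3) (pow_nonneg hxn0 _)
    have hsum1 : Summable (fun i => a (i + (n+1)) * (x n) ^ (i + (n+1))) :=
      ((summable_nat_add_iff (n+1)).mpr (hsum (x n) hxn0 hxn1))
    have hsum2 : Summable (fun i : ℕ => (ε / 2 / ((n : ℝ) + 1)) * (x n) ^ (i + (n+1))) := by
      have : Summable (fun i : ℕ => (x n) ^ (i + (n+1))) :=
        (summable_nat_add_iff (n+1)).mpr (summable_geometric_of_lt_one hxn0 hxn1)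
      exact this.mul_left _
    have hsumnorm : Summable (fun i => ‖a (i + (n+1)) * (x n) ^ (i + (n+1))‖) :=
      Summable.of_nonneg_of_le (fun i => norm_nonneg _) hterm hsum2
    have hb1 : ‖T n‖ ≤ ∑' i, ‖a (i + (n+1)) * (x n) ^ (i + (n+1))‖ :=
      norm_tsum_le_tsum_norm hsumnorm
    have hb2 : ∑' i, ‖a (i + (n+1)) * (x n) ^ (i + (n+1))‖ ≤
        ∑' i : ℕ, (ε / 2 / ((n : ℝ) + 1)) * (x n) ^ (i + (n+1)) :=
      Summable.tsum_le_tsum hterm hsumnorm hsum2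
    have hgeo : ∑' i : ℕ, (x n) ^ (i + (n+1)) = (x n) ^ (n+1) * (1 - x n)⁻¹ := by
      have : ∀ i : ℕ, (x n) ^ (i + (n+1)) = (x n) ^ (n+1) * (x n) ^ i := by
        intro i; rw [pow_add]; ring
      rw [tsum_congr this, tsum_mul_left, tsum_geometric_of_lt_one hxn0 hxn1]
    have hb3 : ∑' i : ℕ, (ε / 2 / ((n : ℝ) + 1)) * (x n) ^ (i + (n+1)) ≤ ε / 2 := by
      rw [tsum_mul_left, hgeo, hxsub n]
      have hinv : (1 / ((n : ℝ) + 1))⁻¹ = (n : ℝ) + 1 := by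
        rw [one_div, inv_inv]
      rw [hinv]
      have hp : (x n) ^ (n+1) ≤ 1 := pow_le_one₀ hxn0 hxn1.le
      have hpn : 0 ≤ (x n) ^ (n+1) := pow_nonneg hxn0 _
      calc ε / 2 / ((n : ℝ) + 1) * ((x n) ^ (n+1) * ((n : ℝ) + 1))
          ≤ ε / 2 / ((n : ℝ) + 1) * (1 * ((n : ℝ) + 1)) := by
            apply mul_le_mul_of_nonneg_left _ (by positivity)
            exact mul_le_mul_of_nonneg_right hp hn1.le
        _ = ε / 2 := by field_simp
    calc ‖T n‖ ≤ ε / 2 := le_trans hb1 (le_trans hb2 hb3)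
      _ < ε := by linarith
  -- combine
  have hdiff : Tendsto (fun n => (∑ i ∈ Finset.range (n+1), a i) - g n) atTop (nhds 0) := by
    have := hA.sub hT
    rw [sub_zero] at this
    exact this.congr fun n => (hkey n).symm
  have := hdiff.add hg
  rw [zero_add] at this
  exact this.congr fun n => by ring
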